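/- A tree T of order at least 3 satisfies γt(T) = 2γ(T) if and only if T has a dominating set S such that (a) every vertex of S is a support vertex of T, and (b) S is a packing in T. -/
import Mathlib


open SimpleGraph

namespace TotalDom

variable {V : Type*}

/-- The closed neighborhood `N[v]` of a vertex. -/
def cnbr (G : SimpleGraph V) (v : V) : Set V := insert v (G.neighborSet v)

/-- `S` is a dominating set: every vertex outside `S` has a neighbor in `S`. -/
def IsDomSet (G : SimpleGraph V) (S : Set V) : Prop := ∀ v ∉ S, ∃ u ∈ S, G.Adj u v

/-- `S` is a total dominating set: every vertex has a neighbor in `S`. -/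
def IsTotalDomSet (G : SimpleGraph V) (S : Set V) : Prop := ∀ v : V, ∃ u ∈ S, G.Adj u v

/-- The domination number `γ(G)`. -/
noncomputable def domNum (G : SimpleGraph V) : ℕ :=
  sInf {n | ∃ S : Set V, IsDomSet G S ∧ S.ncard = n}

/-- The total domination number `γₜ(G)`. -/
noncomputable def totalDomNum (G : SimpleGraph V) : ℕ :=
  sInf {n | ∃ S : Set V, IsTotalDomSet G S ∧ S.ncard = n}

/-- A minimum dominating set (γ-set). -/
def IsMinDomSet (G : SimpleGraph V) (S : Set V) : Prop := IsDomSet G S ∧ S.ncard = domNum G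

/-- `S` is a packing: closed neighborhoods of distinct members are disjoint. -/
def IsPacking (G : SimpleGraph V) (S : Set V) : Prop :=
  S.Pairwise fun u v => Disjoint (cnbr G u) (cnbr G v)

/-- `M(v)`: neighbors of `v` having a neighbor outside `N[v]`. -/
def Mset (G : SimpleGraph V) (v : V) : Set V :=
  {u | G.Adj v u ∧ ∃ w, G.Adj u w ∧ w ∉ cnbr G v}

/-- `D(v)`: neighbors `u` of `v` that are not true twins of `v` with `N[u] ⊆ N[v]`. -/
def Dset (G : SimpleGraph V) (v : V) : Set V :=
  {u | G.Adj v u ∧ cnbr G u ≠ cnbr G v ∧ cnbr G u ⊆ cnbr G v}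

/-- `T(v)`: `v` together with its true twins. -/
def Tset (G : SimpleGraph V) (v : V) : Set V := {u | cnbr G u = cnbr G v}

/-- A non-isolated vertex `v` is special if no `u ∈ M(v)` satisfies `D(v) ⊆ N(u)`. -/
def Special (G : SimpleGraph V) (v : V) : Prop :=
  (G.neighborSet v).Nonempty ∧ ¬ ∃ u ∈ Mset G v, Dset G v ⊆ G.neighborSet u

/-- An `S(G)`-set: a set of special vertices containing exactly one vertex from each
true-twin equivalence class of special vertices. -/
def IsSGSet (G : SimpleGraph V) (S : Set V) : Prop :=
  (∀ u ∈ S, Special G u) ∧ ∀ v, Special G v → ∃! u, u ∈ S ∧ u ∈ Tset G v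

/-- `G` has no isolated vertices. -/
def NoIsolated (G : SimpleGraph V) : Prop := ∀ v : V, ∃ u, G.Adj v u

/-- `G` contains no induced copy of `H`. -/
def Free {α : Type*} (H : SimpleGraph α) (G : SimpleGraph V) : Prop := IsEmpty (H ↪g G)

/-- `H₁`: a 6-cycle plus one chord between vertices at distance two along the cycle. -/
def H1 : SimpleGraph (Fin 6) := cycleGraph 6 ⊔ fromEdgeSet {s(0, 2)}

/-- `H₂`: a 6-cycle `x₁x₂x₃x₄x₅x₆` plus the chords `x₂x₆` and `x₃x₅`. -/
def H2 : SimpleGraph (Fin 6) := cycleGraph 6 ⊔ fromEdgeSet {s(1, 5), s(2, 4)}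

/-- A leaf: a vertex of degree one. -/
def IsLeaf (G : SimpleGraph V) (v : V) : Prop := ∃! u, G.Adj v u

/-- A support vertex: a vertex adjacent to a leaf. -/
def IsSupport (G : SimpleGraph V) (v : V) : Prop := ∃ u, G.Adj v u ∧ IsLeaf G u

/-- `sup(G)`: the set of support vertices. -/
def supSet (G : SimpleGraph V) : Set V := {v | IsSupport G v}

lemma mem_cnbr {G : SimpleGraph V} {v x : V} : x ∈ cnbr G v ↔ x = v ∨ G.Adj v x := by
  simp [cnbr]

lemma acyclic3 (T : SimpleGraph V) (hT : T.IsAcyclic) {a b c : V}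
    (hab : T.Adj a b) (hbc : T.Adj b c) (hac : T.Adj a c) : False := by
  have hpq := isAcyclic_iff_path_unique.mp hT
    ⟨Walk.cons hac Walk.nil, by simp [hac.ne]⟩
    ⟨Walk.cons hab (Walk.cons hbc Walk.nil), by
      rw [Walk.isPath_def]; simp [hab.ne, hbc.ne, hac.ne]⟩
  have := congrArg (fun p => p.1.length) hpq
  simp at this

lemma acyclic6 (T : SimpleGraph V) (hT : T.IsAcyclic) {v u w s u' w' : V}
    (h1 : T.Adj v u) (h2 : T.Adj u w) (h3 : T.Adj w s)
    (h1' : T.Adj v u') (h2' : T.Adj u' w') (h3' : T.Adj w' s)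
    (huu' : u ≠ u') (hvw : v ≠ w) (hvw' : v ≠ w') (hvs : v ≠ s)
    (hus : u ≠ s) (hu's : u' ≠ s) : False := by
  have hpq := isAcyclic_iff_path_unique.mp hT
    ⟨Walk.cons h1 (Walk.cons h2 (Walk.cons h3 Walk.nil)), by
      rw [Walk.isPath_def]; simp [h1.ne, h2.ne, h3.ne, hvw, hvs, hus]⟩
    ⟨Walk.cons h1' (Walk.cons h2' (Walk.cons h3' Walk.nil)), by
      rw [Walk.isPath_def]; simp [h1'.ne, h2'.ne, h3'.ne, hvw', hvs, hu's]⟩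
  have := congrArg (fun p => p.1.support) hpq
  simp at this
  exact huu' this.1

-- every vertex of a connected graph on ≥ 2 vertices has a neighbor
lemma no_isolated [Fintype V] {T : SimpleGraph V} (hc : T.Connected)
    (h2 : 2 ≤ Fintype.card V) (v : V) : ∃ u, T.Adj v u := by
  obtain ⟨w, hw⟩ := Fintype.exists_ne_of_one_lt_card (by omega) v
  obtain ⟨p⟩ := hc.preconnected v w
  cases p with
  | nil => exact absurd rfl hw.symm
  | cons h q => exact ⟨_, h⟩

lemma tds_of {T : SimpleGraph V} {S : Set V} (hS : IsDomSet T S) (f : V → V)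
    (hf : ∀ s ∈ S, T.Adj s (f s)) : IsTotalDomSet T (S ∪ f '' S) := by
  intro x
  by_cases hx : x ∈ S
  · exact ⟨f x, Or.inr ⟨x, hx, rfl⟩, (hf x hx).symm⟩
  · obtain ⟨u, hu, hadj⟩ := hS x hx
    exact ⟨u, Or.inl hu, hadj⟩

lemma domNum_le [Fintype V] {T : SimpleGraph V} {S : Set V} (h : IsDomSet T S) :
    domNum T ≤ S.ncard := Nat.sInf_le ⟨S, h, rfl⟩

lemma totalDomNum_le [Fintype V] {T : SimpleGraph V} {S : Set V} (h : IsTotalDomSet T S) :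
    totalDomNum T ≤ S.ncard := Nat.sInf_le ⟨S, h, rfl⟩

-- if S dominating and f '' S ⊆ f '' (S \ {t}) ∪ S with t ∈ S, then γt ≤ 2|S| - 1
lemma tdn_le_of_save [Fintype V] {T : SimpleGraph V} {S : Set V} (hS : IsDomSet T S)
    {f : V → V} (hf : ∀ s ∈ S, T.Adj s (f s)) {t : V} (ht : t ∈ S)
    (hsub : f '' S ⊆ f '' (S \ {t}) ∪ S) :
    totalDomNum T ≤ S.ncard + (S.ncard - 1) := by
  have h1 : totalDomNum T ≤ (S ∪ f '' S).ncard := totalDomNum_le (tds_of hS f hf)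
  have h2 : S ∪ f '' S ⊆ S ∪ f '' (S \ {t}) := by
    intro x hx
    rcases hx with hx | hx
    · exact Or.inl hx
    · rcases hsub hx with h | h
      · exact Or.inr h
      · exact Or.inl h
  calc totalDomNum T ≤ (S ∪ f '' S).ncard := h1
    _ ≤ (S ∪ f '' (S \ {t})).ncard := Set.ncard_le_ncard h2 (Set.toFinite _)
    _ ≤ S.ncard + (f '' (S \ {t})).ncard := Set.ncard_union_le _ _
    _ ≤ S.ncard + (S \ {t}).ncard := by
        have := Set.ncard_image_le (s := S \ {t}) (f := f) (Set.toFinite _)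
        omega
    _ = S.ncard + (S.ncard - 1) := by rw [Set.ncard_diff_singleton_of_mem ht]

lemma exists_min_dom [Fintype V] (T : SimpleGraph V) :
    ∃ S : Set V, IsDomSet T S ∧ S.ncard = domNum T := by
  have hne : {n | ∃ S : Set V, IsDomSet T S ∧ S.ncard = n}.Nonempty :=
    ⟨(Set.univ : Set V).ncard, Set.univ, fun v hv => absurd (Set.mem_univ v) hv, rfl⟩
  exact Nat.sInf_mem hne

lemma one_le_domNum [Fintype V] [Nonempty V] (T : SimpleGraph V) : 1 ≤ domNum T := by
  obtain ⟨S, hS, hc⟩ := exists_min_dom T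
  rw [← hc]
  by_contra h
  push_neg at h
  interval_cases hn : S.ncard
  · rw [Set.ncard_eq_zero] at hn
    subst hn
    obtain ⟨u, hu, -⟩ := hS (Classical.arbitrary V) (by simp)
    exact hu

lemma gamma_set_good [Fintype V] {T : SimpleGraph V} (hT : T.IsTree) (h3 : 3 ≤ Fintype.card V)
    (hEq : totalDomNum T = 2 * domNum T) {S : Set V}
    (hS : IsDomSet T S) (hc : S.ncard = domNum T) :
    IsPacking T S ∧ ∀ v ∈ S, IsSupport T v := by
  classical
  have hNE : Nonempty V := Fintype.card_pos_iff.mp (by omega)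
  have hNI : ∀ v : V, ∃ u, T.Adj v u := no_isolated hT.isConnected (by omega)
  have h1 : 1 ≤ domNum T := one_le_domNum T
  set nbr : V → V := fun v => (hNI v).choose with hnbr_def
  have hnbr : ∀ v, T.Adj v (nbr v) := fun v => (hNI v).choose_spec
  have contra : ∀ f : V → V, (∀ s ∈ S, T.Adj s (f s)) → ∀ t ∈ S,
      f '' S ⊆ f '' (S \ {t}) ∪ S → False := by
    intro f hf t ht hsub
    have hle := tdn_le_of_save hS hf ht hsub
    omega
  have hpack : IsPacking T S := by
    intro a ha b hb hab
    by_contra hdis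
    rw [Set.not_disjoint_iff] at hdis
    obtain ⟨x, hxa, hxb⟩ := hdis
    rw [mem_cnbr] at hxa hxb
    -- reduce to: either Adj a b, or common neighbor x
    have key : T.Adj a b ∨ (T.Adj a x ∧ T.Adj b x) := by
      rcases hxa with rfl | hxa
      · rcases hxb with rfl | hxb
        · exact absurd rfl hab
        · exact Or.inl hxb.symm
      · rcases hxb with rfl | hxb
        · exact Or.inl hxa
        · exact Or.inr ⟨hxa, hxb⟩
    rcases key with hadj | ⟨hax, hbx⟩
    · refine contra (Function.update nbr a b) ?_ a ha ?_
      · intro s hs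
        rcases eq_or_ne s a with rfl | hne
        · simpa using hadj
        · simpa [Function.update_of_ne hne] using hnbr s
      · rintro y ⟨s, hs, rfl⟩
        rcases eq_or_ne s a with rfl | hne
        · simp only [Function.update_self]
          exact Or.inr hb
        · exact Or.inl ⟨s, ⟨hs, hne⟩, rfl⟩
    · refine contra (Function.update (Function.update nbr a x) b x) ?_ b hb ?_
      · intro s hs
        rcases eq_or_ne s b with rfl | hneb
        · simpa using hbx
        · rcases eq_or_ne s a with rfl | hnea
          · simpa [Function.update_of_ne hneb] using hax
          · simpa [Function.update_of_ne hneb, Function.update_of_ne hnea] using hnbr s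
      · rintro y ⟨s, hs, rfl⟩
        rcases eq_or_ne s b with rfl | hne
        · refine Or.inl ⟨a, ⟨ha, hab⟩, ?_⟩
          simp [Function.update_of_ne hab, Function.update_self]
        · exact Or.inl ⟨s, ⟨hs, hne⟩, rfl⟩
  refine ⟨hpack, ?_⟩
  intro v hv
  by_contra hnsup
  -- every neighbor of v has a neighbor other than v
  have hW : ∀ u, T.Adj v u → ∃ w, T.Adj u w ∧ w ≠ v := by
    intro u hu
    by_contra h
    push_neg at h
    exact hnsup ⟨u, hu, v, hu.symm, h⟩
  choose W hWadj hWne using hW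
  have hWnc : ∀ u (hu : T.Adj v u), W u hu ∉ cnbr T v := by
    intro u hu hmem
    rw [mem_cnbr] at hmem
    rcases hmem with heq | hadj
    · exact hWne u hu heq
    · exact acyclic3 T hT.IsAcyclic hu (hWadj u hu) hadj
  have hWnS : ∀ u (hu : T.Adj v u), W u hu ∉ S := by
    intro u hu hmem
    have hne : v ≠ W u hu := fun h => hWne u hu h.symm
    have hd := hpack hv hmem hne
    exact Set.disjoint_left.mp hd (mem_cnbr.mpr (Or.inr hu))
      (mem_cnbr.mpr (Or.inr (hWadj u hu).symm))
  have hsF : ∀ u (hu : T.Adj v u), ∃ s ∈ S, T.Adj s (W u hu) :=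
    fun u hu => hS _ (hWnS u hu)
  choose sF hsFS hsFadj using hsF
  have hsFne : ∀ u (hu : T.Adj v u), sF u hu ≠ v := by
    intro u hu h
    exact hWnc u hu (mem_cnbr.mpr (Or.inr (h ▸ hsFadj u hu)))
  have hsFnc : ∀ u (hu : T.Adj v u), sF u hu ∉ cnbr T v := by
    intro u hu hmem
    have hd := hpack hv (hsFS u hu) (fun h => hsFne u hu h.symm)
    exact Set.disjoint_left.mp hd hmem (mem_cnbr.mpr (Or.inl rfl))
  have hsInj : ∀ u (hu : T.Adj v u) u' (hu' : T.Adj v u'), u ≠ u' →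
      sF u hu = sF u' hu' → False := by
    intro u hu u' hu' hne heq
    refine acyclic6 T hT.IsAcyclic hu (hWadj u hu) (hsFadj u hu).symm hu'
      (hWadj u' hu') (by rw [heq]; exact (hsFadj u' hu').symm) hne
      (fun h => hWne u hu h.symm) (fun h => hWne u' hu' h.symm)
      (fun h => hsFne u hu h.symm) ?_ ?_
    · exact fun h => hsFnc u hu (h ▸ mem_cnbr.mpr (Or.inr hu))
    · exact fun h => hsFnc u hu (h ▸ mem_cnbr.mpr (Or.inr hu'))
  have hg : ∀ s : V, ∃ x, T.Adj s x ∧ ∀ u (hu : T.Adj v u), sF u hu = s → W u hu = x := by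
    intro s
    by_cases hx : ∃ u, ∃ hu : T.Adj v u, sF u hu = s
    · obtain ⟨u, hu, hus⟩ := hx
      refine ⟨W u hu, by rw [← hus]; exact hsFadj u hu, ?_⟩
      intro u' hu' h'
      rcases eq_or_ne u' u with rfl | hne
      · rfl
      · exact (hsInj u' hu' u hu hne (h'.trans hus.symm)).elim
    · exact ⟨nbr s, hnbr s, fun u hu h => absurd ⟨u, hu, h⟩ hx⟩
  choose g hgadj hgW using hg
  set u₀ := nbr v with hu₀
  set D := (S \ {v}) ∪ ({u₀} ∪ g '' (S \ {v})) with hDdef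
  have hDtds : IsTotalDomSet T D := by
    intro x
    by_cases hxv : x = v
    · exact ⟨u₀, Or.inr (Or.inl rfl), by rw [hxv]; exact (hnbr v).symm⟩
    by_cases hxS : x ∈ S
    · exact ⟨g x, Or.inr (Or.inr ⟨x, ⟨hxS, hxv⟩, rfl⟩), (hgadj x).symm⟩
    · obtain ⟨s, hsS', hsadj⟩ := hS x hxS
      rcases eq_or_ne s v with rfl | hsv
      · exact ⟨W x hsadj, Or.inr (Or.inr ⟨sF x hsadj, ⟨hsFS x hsadj, hsFne x hsadj⟩,
          (hgW (sF x hsadj) x hsadj rfl).symm⟩), (hWadj x hsadj).symm⟩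
      · exact ⟨s, Or.inl ⟨hsS', hsv⟩, hsadj⟩
  have hkey : D.ncard ≤ (S.ncard - 1) + (1 + (S.ncard - 1)) := by
    have e1 : (S \ {v}).ncard = S.ncard - 1 := Set.ncard_diff_singleton_of_mem hv
    have c1 := Set.ncard_union_le (S \ {v}) ({u₀} ∪ g '' (S \ {v}))
    have c2 := Set.ncard_union_le ({u₀} : Set V) (g '' (S \ {v}))
    have c3 := Set.ncard_image_le (s := S \ {v}) (f := g) (Set.toFinite _)
    have c4 : ({u₀} : Set V).ncard = 1 := Set.ncard_singleton _
    rw [← hDdef] at c1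
    omega
  have hfin := totalDomNum_le hDtds
  omega

lemma exists_min_total_dom [Fintype V] (T : SimpleGraph V) (hNI : ∀ v : V, ∃ u, T.Adj v u) :
    ∃ S : Set V, IsTotalDomSet T S ∧ S.ncard = totalDomNum T := by
  have hne : {n | ∃ S : Set V, IsTotalDomSet T S ∧ S.ncard = n}.Nonempty :=
    ⟨(Set.univ : Set V).ncard, Set.univ, fun v => ⟨(hNI v).choose, Set.mem_univ _,
      (hNI v).choose_spec.symm⟩, rfl⟩
  exact Nat.sInf_mem hne

/-- A tree `T` of order at least 3 satisfies `γₜ(T) = 2γ(T)` iff `T` has a dominating set `S`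
such that every vertex of `S` is a support vertex of `T` and `S` is a packing in `T`. -/
theorem stmt10 {V : Type*} [Fintype V] (T : SimpleGraph V) (hT : T.IsTree)
    (hcard : 3 ≤ Fintype.card V) :
    totalDomNum T = 2 * domNum T ↔
      ∃ S : Set V, IsDomSet T S ∧ (∀ v ∈ S, IsSupport T v) ∧ IsPacking T S := by
  classical
  have hNE : Nonempty V := Fintype.card_pos_iff.mp (by omega)
  have hNI : ∀ v : V, ∃ u, T.Adj v u := no_isolated hT.isConnected (by omega)
  constructor
  · intro hEq
    obtain ⟨S, hS, hc⟩ := exists_min_dom T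
    obtain ⟨hpack, hsup⟩ := gamma_set_good hT hcard hEq hS hc
    exact ⟨S, hS, hsup, hpack⟩
  · rintro ⟨S, hS, hsup, hpack⟩
    set nbr : V → V := fun v => (hNI v).choose with hnbr_def
    have hnbr : ∀ v, T.Adj v (nbr v) := fun v => (hNI v).choose_spec
    -- upper bound: γt ≤ 2γ
    obtain ⟨S₀, hS₀, hc₀⟩ := exists_min_dom T
    have hle : totalDomNum T ≤ 2 * domNum T := by
      have h := totalDomNum_le (tds_of hS₀ nbr (fun s _ => hnbr s))
      have h2 := Set.ncard_union_le S₀ (nbr '' S₀)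
      have h3 := Set.ncard_image_le (s := S₀) (f := nbr) (Set.toFinite _)
      omega
    have hgle : domNum T ≤ S.ncard := domNum_le hS
    -- lower bound: 2|S| ≤ γt
    obtain ⟨D, hD, hcD⟩ := exists_min_total_dom T hNI
    choose ψ hψD hψadj using hD
    have hsD : ∀ s ∈ S, s ∈ D := by
      intro s hsS
      obtain ⟨ℓ, hadj, x, hx, huniq⟩ := hsup s hsS
      have h1 : ψ ℓ = x := huniq (ψ ℓ) (hψadj ℓ).symm
      have h2 : s = x := huniq s hadj.symm
      have : s = ψ ℓ := h2.trans h1.symm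
      rw [this]; exact hψD ℓ
    have hmemcn : ∀ s ∈ S, ∀ b : Bool, (if b then ψ s else s) ∈ cnbr T s := by
      intro s hsS b
      cases b
      · exact mem_cnbr.mpr (Or.inl rfl)
      · exact mem_cnbr.mpr (Or.inr (hψadj s).symm)
    have hmemD : ∀ s ∈ S, ∀ b : Bool, (if b then ψ s else s) ∈ D := by
      intro s hsS b
      cases b
      · exact hsD s hsS
      · exact hψD s
    have hinj : Function.Injective
        (fun p : ↥S × Bool => (⟨if p.2 then ψ p.1 else p.1,
          hmemD p.1 p.1.2 p.2⟩ : ↥D)) := by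
      rintro ⟨⟨s, hs⟩, b⟩ ⟨⟨s', hs'⟩, b'⟩ heq
      simp only [Subtype.mk.injEq] at heq
      have hss' : s = s' := by
        by_contra hne
        exact Set.disjoint_left.mp (hpack hs hs' hne)
          (hmemcn s hs b) (heq ▸ hmemcn s' hs' b')
      subst hss'
      have hbb' : b = b' := by
        cases b <;> cases b' <;> first
          | rfl
          | (exfalso
             first
               | exact (hψadj s).ne (by simpa using heq.symm)
               | exact (hψadj s).ne (by simpa using heq))
      rw [hbb']
    have hcount : 2 * S.ncard ≤ D.ncard := by
      have := Nat.card_le_card_of_injective _ hinj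
      rwa [Nat.card_prod, Nat.card_coe_set_eq, Nat.card_coe_set_eq,
        Nat.card_eq_fintype_card, Fintype.card_bool, mul_comm] at this
    omega


end TotalDom
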